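/- There exists a universal constant K such that the following holds. Let t ≥ 1, let Y ∈ [−1/2, 1/2]^N be fixed, let ΔX be a centered Gaussian vector on ℝ^N with covariance (ε/t)·I_N, let ΔY = H·ΔX, and let ΔY' = 2·Y∘ΔY + ΔY∘ΔY − (ε/t)·𝟙. Then: (i) for all i ≠ j, Cov((ΔX)_i, (ΔX)_j) = 0; (ii) for all i, j ∈ [N], |Cov(2(ΔX)_i, 2(ΔY')_j)| ≤ 4ε/(t√N) + K·t^{−3/2}; and (iii) for all i ≠ j, |Cov(2(ΔY')_i, 2(ΔY')_j)| ≤ K·t^{−3/2}. -/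

import Mathlib

open MeasureTheory ProbabilityTheory Finset

noncomputable section

/-- Bit strings of length `n`; there are `N = 2^n` of them. -/
abbrev BV (n : ℕ) := Fin n → Bool

/-- Inner product (mod nothing, just the count) of two bit strings. -/
def bip {n : ℕ} (x y : BV n) : ℕ := (Finset.univ.filter fun i => x i && y i).card

/-- The `N × N` normalized Walsh-Hadamard matrix, `H_{x,y} = (-1)^{⟨x,y⟩} / √N`. -/
def Had (n : ℕ) : Matrix (BV n) (BV n) ℝ :=
  Matrix.of fun x y => (-1 : ℝ) ^ bip x y / Real.sqrt (2 ^ n)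

/-- `ε = 1 / (C ln N)` with `N = 2^n`. -/
def eps (C : ℝ) (n : ℕ) : ℝ := 1 / (C * Real.log (2 ^ n))

/-- The Gaussian vector `X` with i.i.d. `N(0, ε)` coordinates. -/
def gaussVec (C : ℝ) (n : ℕ) : Measure (BV n → ℝ) :=
  Measure.pi fun _ => gaussianReal 0 (eps C n).toNNReal

/-- The distribution `G'` of `Z = (X, Y∘Y - ε·𝟙)` with `Y = H·X`, packed as a
function on `BV n ⊕ BV n` (first `N` coordinates are `X`, last `N` are `Y∘Y - ε`). -/
def Gmeas' (C : ℝ) (n : ℕ) : Measure (BV n ⊕ BV n → ℝ) :=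
  (gaussVec C n).map fun X => Sum.elim X fun i => ((Had n).mulVec X i) ^ 2 - eps C n

/-- Truncation to `[-1, 1]`. -/
def trnc (a : ℝ) : ℝ := min 1 (max (-1) a)

/-- Randomized rounding of `a` to `±1`: output `1` with probability `(1 + trnc a)/2`
and `-1` with probability `(1 - trnc a)/2`. -/
def roundM (a : ℝ) : Measure ℝ :=
  ((1 + trnc a) / 2).toNNReal • Measure.dirac 1 +
    ((1 - trnc a) / 2).toNNReal • Measure.dirac (-1)

/-- The distribution `D` on `{±1}^{2N}`: sample `z ~ G'` and round each coordinate
independently. -/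
def Dmeas (C : ℝ) (n : ℕ) : Measure (BV n ⊕ BV n → ℝ) :=
  (Gmeas' C n).bind fun z => Measure.pi fun i => roundM (z i)

/-- `F : ℝ^ι → ℝ` is multilinear if `F z = Σ_S F̂(S) ∏_{i ∈ S} z_i`. -/
def IsMultilinear {ι : Type*} [Fintype ι] [DecidableEq ι] (F : (ι → ℝ) → ℝ) : Prop :=
  ∃ c : Finset ι → ℝ, ∀ z, F z = ∑ S : Finset ι, c S * ∏ i ∈ S, z i

/-- The Fourier coefficient `F̂(S)` of `F` (over the hypercube `{±1}^ι`); for a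
multilinear `F` these are precisely its multilinear coefficients. -/
def mlCoeff {ι : Type*} [Fintype ι] [DecidableEq ι] (F : (ι → ℝ) → ℝ) (S : Finset ι) : ℝ :=
  (∑ z : ι → Bool, F (fun i => if z i then 1 else -1) * ∏ i ∈ S, (if z i then (1 : ℝ) else -1)) /
    2 ^ Fintype.card ι

/-- `L_{1,2}(F) = Σ_{|S| = 2} |F̂(S)|`. -/
def L12 {ι : Type*} [Fintype ι] [DecidableEq ι] (F : (ι → ℝ) → ℝ) : ℝ :=
  ∑ S ∈ Finset.univ.filter (fun S : Finset ι => S.card = 2), |mlCoeff F S|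

/-- The restriction `F_ρ` of `F` under `ρ = (S, w)`: coordinates outside `S` are
fixed to the values of `w`. -/
def restrictML {ι : Type*} [DecidableEq ι] (F : (ι → ℝ) → ℝ) (S : Finset ι)
    (w : ι → ℝ) : (ι → ℝ) → ℝ :=
  fun y => F fun i => if i ∈ S then y i else w i

/-- `φ(X, Y) = (1/N) Σ_i (Σ_j H_{ij} X_j)² Y_i`. -/
def phi (n : ℕ) (X Y : BV n → ℝ) : ℝ :=
  (∑ i, ((Had n).mulVec X i) ^ 2 * Y i) / 2 ^ n

/-- The multilinear part `φ_{i≠j}(X, Y) = (1/N) Σ_i Σ_{j ≠ k} H_{ij} H_{ik} X_j X_k Y_i`. -/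
def phiOff (n : ℕ) (X Y : BV n → ℝ) : ℝ :=
  (∑ i, ∑ j, ∑ k ∈ Finset.univ \ {j}, Had n i j * Had n i k * X j * X k * Y i) / 2 ^ n

/-- The Fourier coefficient `f̂(x) = 2^{-n} Σ_y f(y) (-1)^{⟨x,y⟩}` of `f : {0,1}^n → {±1}`. -/
def hatF (n : ℕ) (f : BV n → ℝ) (x : BV n) : ℝ :=
  (∑ y, f y * (-1 : ℝ) ^ bip x y) / 2 ^ n

/-- Covariance of two real random variables under a measure. -/
def cov {α : Type*} [MeasurableSpace α] (μ : Measure α) (f g : α → ℝ) : ℝ :=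
  (∫ ω, f ω * g ω ∂μ) - (∫ ω, f ω ∂μ) * ∫ ω, g ω ∂μ

/-- The centered Gaussian vector `ΔX` on `ℝ^N` with covariance `(ε/t)·I_N`. -/
def gaussStep (C : ℝ) (n : ℕ) (t : ℝ) : Measure (BV n → ℝ) :=
  Measure.pi fun _ => gaussianReal 0 (eps C n / t).toNNReal

/-- `ΔY' = 2 Y ∘ ΔY + ΔY ∘ ΔY - (ε/t) 𝟙` where `ΔY = H · ΔX`. -/
def dY' (C : ℝ) (n : ℕ) (t : ℝ) (Y : BV n → ℝ) (dX : BV n → ℝ) : BV n → ℝ :=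
  fun i => 2 * Y i * (Had n).mulVec dX i + ((Had n).mulVec dX i) ^ 2 - eps C n / t


open Real Filter Topology
open scoped NNReal ENNReal

namespace S10


lemma integrable_pow_gauss {b : ℝ} (hb : 0 < b) (n : ℕ) :
    Integrable fun x : ℝ => x ^ n * rexp (-b * x ^ 2) := by
  have h := integrable_rpow_mul_exp_neg_mul_sq hb (s := (n:ℝ))
    (lt_of_lt_of_le neg_one_lt_zero (Nat.cast_nonneg n))
  simpa [Real.rpow_natCast] using h

lemma tendsto_pow_gauss_atTop {b : ℝ} (hb : 0 < b) (n : ℕ) :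
    Tendsto (fun x : ℝ => x ^ n * rexp (-b * x ^ 2)) atTop (𝓝 0) := by
  have h1 : Tendsto (fun y : ℝ => y ^ n * rexp (-y)) atTop (𝓝 0) :=
    tendsto_pow_mul_exp_neg_atTop_nhds_zero n
  have h2 : Tendsto (fun x : ℝ => b * x) atTop atTop :=
    Tendsto.const_mul_atTop hb tendsto_id
  have h3 : Tendsto (fun x : ℝ => b⁻¹ ^ n * ((b * x) ^ n * rexp (-(b * x)))) atTop
      (𝓝 (b⁻¹ ^ n * 0)) := ((h1.comp h2).const_mul _)
  rw [mul_zero] at h3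
  apply tendsto_of_tendsto_of_tendsto_of_le_of_le' tendsto_const_nhds h3
  · filter_upwards [eventually_ge_atTop (1:ℝ)] with x hx
    positivity
  · filter_upwards [eventually_ge_atTop (1:ℝ)] with x hx
    have hx0 : (0:ℝ) ≤ x := by linarith
    have : rexp (-b * x ^ 2) ≤ rexp (-(b * x)) := by
      apply Real.exp_le_exp.2
      nlinarith [mul_le_mul_of_nonneg_left (by nlinarith : x ≤ x^2) hb.le]
    calc x ^ n * rexp (-b * x ^ 2) ≤ x ^ n * rexp (-(b * x)) := by
          apply mul_le_mul_of_nonneg_left this (by positivity)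
      _ = b⁻¹ ^ n * ((b * x) ^ n * rexp (-(b * x))) := by
          rw [mul_pow, ← mul_assoc, ← mul_assoc, ← mul_pow, inv_mul_cancel₀ hb.ne', one_pow, one_mul]

lemma tendsto_pow_gauss_atBot {b : ℝ} (hb : 0 < b) (n : ℕ) :
    Tendsto (fun x : ℝ => x ^ n * rexp (-b * x ^ 2)) atBot (𝓝 0) := by
  have h := (tendsto_pow_gauss_atTop hb n).comp tendsto_neg_atBot_atTop
  have h2 := h.const_mul ((-1:ℝ)^n)
  rw [mul_zero] at h2
  refine h2.congr fun x => ?_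
  simp only [Function.comp_apply]
  rw [← mul_assoc, ← mul_pow]
  ring_nf

lemma gauss_moment_rec {b : ℝ} (hb : 0 < b) (n : ℕ) :
    (2*b) * ∫ x : ℝ, x ^ (n+2) * rexp (-b * x ^ 2)
      = (n+1 : ℝ) * ∫ x : ℝ, x ^ n * rexp (-b * x ^ 2) := by
  have hintn := integrable_pow_gauss hb n
  have hintn2 := integrable_pow_gauss hb (n+2)
  have hint : Integrable (fun x : ℝ =>
      (n+1 : ℝ) * (x ^ n * rexp (-b * x ^ 2)) - (2*b) * (x ^ (n+2) * rexp (-b * x ^ 2))) :=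
    (hintn.const_mul _).sub (hintn2.const_mul _)
  have hderiv : ∀ x : ℝ, HasDerivAt (fun x : ℝ => x ^ (n+1) * rexp (-b * x ^ 2))
      ((n+1 : ℝ) * (x ^ n * rexp (-b * x ^ 2)) - (2*b) * (x ^ (n+2) * rexp (-b * x ^ 2))) x := by
    intro x
    have h1 : HasDerivAt (fun x : ℝ => x ^ (n+1)) ((n+1 : ℝ) * x ^ n) x := by
      simpa using hasDerivAt_pow (n+1) x
    have h3 : HasDerivAt (fun x : ℝ => -b * x ^ 2) (-b * (2*x)) x := by
      simpa using (hasDerivAt_pow 2 x).const_mul (-b)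
    have h2 : HasDerivAt (fun x : ℝ => rexp (-b * x ^ 2)) (rexp (-b * x ^ 2) * (-b * (2*x))) x :=
      h3.exp
    have := h1.mul h2
    refine this.congr_deriv ?_
    ring
  have htop : Tendsto (fun x : ℝ => x ^ (n+1) * rexp (-b * x ^ 2)) atTop (𝓝 0) :=
    tendsto_pow_gauss_atTop hb (n+1)
  have hbot : Tendsto (fun x : ℝ => x ^ (n+1) * rexp (-b * x ^ 2)) atBot (𝓝 0) :=
    tendsto_pow_gauss_atBot hb (n+1)
  have hIoi := integral_Ioi_of_hasDerivAt_of_tendsto' (a := 0)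
    (fun x _ => hderiv x) hint.integrableOn htop
  have hIic := integral_Iic_of_hasDerivAt_of_tendsto' (a := 0)
    (fun x _ => hderiv x) hint.integrableOn hbot
  have htot : ∫ x : ℝ, ((n+1 : ℝ) * (x ^ n * rexp (-b * x ^ 2))
      - (2*b) * (x ^ (n+2) * rexp (-b * x ^ 2))) = 0 := by
    rw [← intervalIntegral.integral_Iic_add_Ioi hint.integrableOn hint.integrableOn, hIoi, hIic]
    simp
  rw [integral_sub (hintn.const_mul _) (hintn2.const_mul _), integral_const_mul,
    integral_const_mul] at htot
  linarith

lemma integral_pow_gauss_odd (b : ℝ) (n : ℕ) (hn : Odd n) :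
    ∫ x : ℝ, x ^ n * rexp (-b * x ^ 2) = 0 := by
  have h := integral_neg_eq_self (fun x : ℝ => x ^ n * rexp (-b * x ^ 2)) volume
  have h2 : ∀ x : ℝ, (-x) ^ n * rexp (-b * (-x) ^ 2) = -(x ^ n * rexp (-b * x ^ 2)) := by
    intro x
    rw [hn.neg_pow, neg_sq]
    ring
  simp_rw [h2, integral_neg] at h
  linarith

lemma integral_pow_gauss_zero {b : ℝ} (hb : 0 < b) :
    ∫ x : ℝ, x ^ 0 * rexp (-b * x ^ 2) = √(π / b) := by
  simp only [pow_zero, one_mul]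
  exact integral_gaussian b

lemma integral_pow_gauss_two {b : ℝ} (hb : 0 < b) :
    ∫ x : ℝ, x ^ 2 * rexp (-b * x ^ 2) = √(π / b) / (2*b) := by
  have h := gauss_moment_rec hb 0
  rw [integral_pow_gauss_zero hb] at h
  have h2b : (2*b) ≠ 0 := by positivity
  field_simp at h ⊢
  linarith

lemma integral_pow_gauss_four {b : ℝ} (hb : 0 < b) :
    ∫ x : ℝ, x ^ 4 * rexp (-b * x ^ 2) = 3 * (√(π / b) / (2*b)) / (2*b) := by
  have h := gauss_moment_rec hb 2
  rw [integral_pow_gauss_two hb] at h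
  have h2b : (2*b) ≠ 0 := by positivity
  field_simp at h ⊢
  linarith



section GReal
variable {v : ℝ≥0}

lemma vpos (hv : v ≠ 0) : (0:ℝ) < (v:ℝ) :=
  NNReal.coe_pos.2 (lt_of_le_of_ne (zero_le : (0:ℝ≥0) ≤ v) (Ne.symm hv))

lemma bpos (hv : v ≠ 0) : (0:ℝ) < (2 * (v:ℝ))⁻¹ := by
  have := vpos hv; positivity

lemma pdf_eq (hv : v ≠ 0) (x : ℝ) :
    gaussianPDFReal 0 v x = (√(2 * π * v))⁻¹ * rexp (-(2 * (v:ℝ))⁻¹ * x ^ 2) := by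
  have hv' := (vpos hv).ne'
  rw [gaussianPDFReal]
  congr 1
  rw [sub_zero]
  field_simp

lemma greal_integral_eq (hv : v ≠ 0) (g : ℝ → ℝ) :
    ∫ x, g x ∂(gaussianReal 0 v) = ∫ x, gaussianPDFReal 0 v x * g x := by
  rw [gaussianReal_of_var_ne_zero 0 hv, gaussianPDF_def]
  rw [show (fun x => ENNReal.ofReal (gaussianPDFReal 0 v x))
      = (fun x => ((fun x => (gaussianPDFReal 0 v x).toNNReal) x : ℝ≥0∞)) from rfl]
  rw [integral_withDensity_eq_integral_smul
    ((measurable_gaussianPDFReal 0 v).real_toNNReal) g]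
  congr 1; ext x
  simp [NNReal.smul_def, Real.coe_toNNReal _ (gaussianPDFReal_nonneg 0 v x)]

lemma greal_integrable (hv : v ≠ 0) (g : ℝ → ℝ)
    (h : Integrable (fun x => gaussianPDFReal 0 v x * g x)) :
    Integrable g (gaussianReal 0 v) := by
  rw [gaussianReal_of_var_ne_zero 0 hv]
  have h' : Integrable (fun x => (gaussianPDFReal 0 v x).toNNReal • g x) volume := by
    apply h.congr
    filter_upwards with x
    simp [NNReal.smul_def, Real.coe_toNNReal _ (gaussianPDFReal_nonneg 0 v x)]
  exact (integrable_withDensity_iff_integrable_smul (μ := volume)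
    (f := fun x => (gaussianPDFReal 0 v x).toNNReal)
    ((measurable_gaussianPDFReal 0 v).real_toNNReal)).2 h'

lemma gmom_int (hv : v ≠ 0) (k : ℕ) : Integrable (fun x : ℝ => x ^ k) (gaussianReal 0 v) := by
  apply greal_integrable hv
  have h := (integrable_pow_gauss (bpos hv) k).const_mul (√(2 * π * v))⁻¹
  apply h.congr
  filter_upwards with x
  rw [pdf_eq hv]
  ring

lemma gmom_odd (hv : v ≠ 0) (k : ℕ) (hk : Odd k) :
    ∫ x : ℝ, x ^ k ∂(gaussianReal 0 v) = 0 := by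
  rw [greal_integral_eq hv]
  have h : ∀ x : ℝ, gaussianPDFReal 0 v x * x ^ k
      = (√(2 * π * v))⁻¹ * (x ^ k * rexp (-(2 * (v:ℝ))⁻¹ * x ^ 2)) := by
    intro x; rw [pdf_eq hv]; ring
  simp_rw [h, integral_const_mul, integral_pow_gauss_odd _ k hk, mul_zero]

lemma sqrt_ne (hv : v ≠ 0) : √(2 * π * v) ≠ 0 := by
  have h := vpos hv
  rw [Real.sqrt_ne_zero']
  positivity

lemma sqrt_pib (hv : v ≠ 0) : √(π / (2 * (v:ℝ))⁻¹) = √(2 * π * v) := by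
  congr 1
  have hv' := (vpos hv).ne'
  field_simp

lemma gmom_zero : ∫ x : ℝ, x ^ 0 ∂(gaussianReal 0 v) = 1 := by
  simp

lemma gmom_two (hv : v ≠ 0) : ∫ x : ℝ, x ^ 2 ∂(gaussianReal 0 v) = (v:ℝ) := by
  rw [greal_integral_eq hv]
  have h : ∀ x : ℝ, gaussianPDFReal 0 v x * x ^ 2
      = (√(2 * π * v))⁻¹ * (x ^ 2 * rexp (-(2 * (v:ℝ))⁻¹ * x ^ 2)) := by
    intro x; rw [pdf_eq hv]; ring
  simp_rw [h, integral_const_mul, integral_pow_gauss_two (bpos hv), sqrt_pib hv]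
  have h1 := sqrt_ne hv
  have h2 := (vpos hv).ne'
  field_simp

lemma gmom_four (hv : v ≠ 0) : ∫ x : ℝ, x ^ 4 ∂(gaussianReal 0 v) = 3 * (v:ℝ) ^ 2 := by
  rw [greal_integral_eq hv]
  have h : ∀ x : ℝ, gaussianPDFReal 0 v x * x ^ 4
      = (√(2 * π * v))⁻¹ * (x ^ 4 * rexp (-(2 * (v:ℝ))⁻¹ * x ^ 2)) := by
    intro x; rw [pdf_eq hv]; ring
  simp_rw [h, integral_const_mul, integral_pow_gauss_four (bpos hv), sqrt_pib hv]
  have h1 := sqrt_ne hv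
  have h2 := (vpos hv).ne'
  field_simp

end GReal


/-- moment function -/
noncomputable def gm (v : ℝ≥0) (k : ℕ) : ℝ := ∫ y : ℝ, y ^ k ∂(gaussianReal 0 v)

lemma gm0 {v : ℝ≥0} : gm v 0 = 1 := by simp [gm]
lemma gm_odd {v : ℝ≥0} (hv : v ≠ 0) {k : ℕ} (hk : Odd k) : gm v k = 0 := gmom_odd hv k hk
lemma gm2 {v : ℝ≥0} (hv : v ≠ 0) : gm v 2 = (v:ℝ) := gmom_two hv
lemma gm4 {v : ℝ≥0} (hv : v ≠ 0) : gm v 4 = 3 * (v:ℝ)^2 := gmom_four hv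

section Pi
variable {ι : Type*} [Fintype ι] [DecidableEq ι] {v : ℝ≥0}

/-- the product gaussian measure -/
noncomputable def piG (ι : Type*) [Fintype ι] (v : ℝ≥0) : Measure (ι → ℝ) :=
  Measure.pi fun _ => gaussianReal 0 v

instance (ι : Type*) [Fintype ι] (v : ℝ≥0) : IsProbabilityMeasure (piG ι v) := by
  unfold piG; infer_instance

lemma mon_integral (v : ℝ≥0) (e : ι → ℕ) :
    ∫ x : ι → ℝ, (∏ i, x i ^ e i) ∂(piG ι v) = ∏ i, gm v (e i) := by
  letI : MeasureSpace ℝ := ⟨gaussianReal 0 v⟩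
  haveI : SigmaFinite (volume : Measure ℝ) := by
    change SigmaFinite (gaussianReal 0 v); infer_instance
  exact MeasureTheory.integral_fintype_prod_eq_prod (fun i (y:ℝ) => y ^ e i)

lemma mon_integrable (hv : v ≠ 0) (e : ι → ℕ) :
    Integrable (fun x : ι → ℝ => ∏ i, x i ^ e i) (piG ι v) := by
  letI : MeasureSpace ℝ := ⟨gaussianReal 0 v⟩
  haveI : SigmaFinite (volume : Measure ℝ) := by
    change SigmaFinite (gaussianReal 0 v); infer_instance
  exact Integrable.fintype_prod (f := fun i (y:ℝ) => y ^ e i) (fun i => gmom_int hv (e i))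

/-- exponent indicator -/
def ind (i : ι) : ι → ℕ := fun a => if a = i then 1 else 0

lemma prod_pow_ind (x : ι → ℝ) (i : ι) : ∏ a, x a ^ ind i a = x i := by
  simp [ind, pow_ite, Finset.prod_ite_eq']

def e2 (i j : ι) : ι → ℕ := fun a => ind i a + ind j a
def e3 (i j k : ι) : ι → ℕ := fun a => ind i a + ind j a + ind k a
def e4 (i j k l : ι) : ι → ℕ := fun a => ind i a + ind j a + ind k a + ind l a

lemma mono_eq2 (x : ι → ℝ) (i j : ι) : x i * x j = ∏ a, x a ^ e2 i j a := by
  simp only [e2, pow_add, Finset.prod_mul_distrib, prod_pow_ind]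

lemma mono_eq3 (x : ι → ℝ) (i j k : ι) : x i * x j * x k = ∏ a, x a ^ e3 i j k a := by
  simp only [e3, pow_add, Finset.prod_mul_distrib, prod_pow_ind]

lemma mono_eq4 (x : ι → ℝ) (i j k l : ι) :
    x i * x j * x k * x l = ∏ a, x a ^ e4 i j k l a := by
  simp only [e4, pow_add, Finset.prod_mul_distrib, prod_pow_ind]

lemma Int1 (hv : v ≠ 0) (i : ι) : Integrable (fun x : ι → ℝ => x i) (piG ι v) := by
  have h := mon_integrable (ι := ι) hv (ind i)
  apply h.congr
  filter_upwards with x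
  exact prod_pow_ind x i

lemma Int2 (hv : v ≠ 0) (i j : ι) : Integrable (fun x : ι → ℝ => x i * x j) (piG ι v) := by
  have h := mon_integrable (ι := ι) hv (e2 i j)
  apply h.congr
  filter_upwards with x
  exact (mono_eq2 x i j).symm

lemma Int3 (hv : v ≠ 0) (i j k : ι) :
    Integrable (fun x : ι → ℝ => x i * x j * x k) (piG ι v) := by
  have h := mon_integrable (ι := ι) hv (e3 i j k)
  apply h.congr
  filter_upwards with x
  exact (mono_eq3 x i j k).symm

lemma Int4 (hv : v ≠ 0) (i j k l : ι) :
    Integrable (fun x : ι → ℝ => x i * x j * x k * x l) (piG ι v) := by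
  have h := mon_integrable (ι := ι) hv (e4 i j k l)
  apply h.congr
  filter_upwards with x
  exact (mono_eq4 x i j k l).symm

lemma prod_single {f : ι → ℝ} (i : ι) (h : ∀ a, a ≠ i → f a = 1) : ∏ a, f a = f i :=
  Finset.prod_eq_single i (fun b _ hb => h b hb) (fun hi => absurd (Finset.mem_univ i) hi)

lemma prod_pair {f : ι → ℝ} {i j : ι} (hij : i ≠ j) (h : ∀ a, a ≠ i → a ≠ j → f a = 1) :
    ∏ a, f a = f i * f j := by
  rw [← Finset.mul_prod_erase Finset.univ f (Finset.mem_univ i)]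
  congr 1
  refine Finset.prod_eq_single_of_mem j (Finset.mem_erase.2 ⟨hij.symm, Finset.mem_univ j⟩) ?_
  exact fun b hb hbj => h b (Finset.ne_of_mem_erase hb) hbj

lemma I1 (hv : v ≠ 0) (i : ι) : ∫ x : ι → ℝ, x i ∂(piG ι v) = 0 := by
  have h : (fun x : ι → ℝ => x i) = fun x => ∏ a, x a ^ ind i a := by
    funext x; exact (prod_pow_ind x i).symm
  rw [h, mon_integral]
  exact Finset.prod_eq_zero (Finset.mem_univ i)
    (by simp [ind]; exact gm_odd hv odd_one)

lemma I2 (hv : v ≠ 0) (i j : ι) :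
    ∫ x : ι → ℝ, x i * x j ∂(piG ι v) = if i = j then (v:ℝ) else 0 := by
  have h : (fun x : ι → ℝ => x i * x j) = fun x => ∏ a, x a ^ e2 i j a := by
    funext x; exact mono_eq2 x i j
  rw [h, mon_integral]
  by_cases hij : i = j
  · subst hij
    simp only [if_pos rfl]
    rw [prod_single i (fun a ha => by simp [e2, ind, ha]; exact gm0)]
    simp [e2, ind]
    exact gm2 hv
  · simp only [if_neg hij]
    refine Finset.prod_eq_zero (Finset.mem_univ i) ?_
    have : e2 i j i = 1 := by simp [e2, ind, hij]
    rw [this]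
    exact gm_odd hv odd_one

lemma I3 (hv : v ≠ 0) (i j k : ι) :
    ∫ x : ι → ℝ, x i * x j * x k ∂(piG ι v) = 0 := by
  have h : (fun x : ι → ℝ => x i * x j * x k) = fun x => ∏ a, x a ^ e3 i j k a := by
    funext x; exact mono_eq3 x i j k
  rw [h, mon_integral]
  -- some index has odd exponent since total degree is 3
  have htot : ∑ a, e3 i j k a = 3 := by
    simp [e3, ind, Finset.sum_add_distrib, Finset.sum_ite_eq']
  by_contra hne
  have hall : ∀ a ∈ Finset.univ, ¬ Odd (e3 i j k a) := by
    intro a _ hodd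
    exact hne (Finset.prod_eq_zero (Finset.mem_univ a) (gm_odd hv hodd))
  have heven : Even (∑ a, e3 i j k a) := by
    apply Finset.even_sum
    intro a ha
    exact Nat.not_odd_iff_even.1 (hall a ha)
  rw [htot] at heven
  exact (Nat.not_even_iff_odd.2 ⟨1, by norm_num⟩) heven

def dlt (i j : ι) : ℝ := if i = j then 1 else 0

lemma I4 (hv : v ≠ 0) (i j k l : ι) :
    ∫ x : ι → ℝ, x i * x j * x k * x l ∂(piG ι v)
      = (v:ℝ)^2 * (dlt i j * dlt k l + dlt i k * dlt j l + dlt i l * dlt j k) := by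
  have h : (fun x : ι → ℝ => x i * x j * x k * x l) = fun x => ∏ a, x a ^ e4 i j k l a := by
    funext x; exact mono_eq4 x i j k l
  rw [h, mon_integral]
  by_cases hij : i = j
  · subst hij
    by_cases hik : i = k
    · subst hik
      by_cases hil : i = l
      · subst hil
        rw [prod_single i (fun a ha => by simp [e4, ind, ha]; exact gm0)]
        rw [show e4 i i i i i = 4 by simp [e4, ind], gm4 hv]
        simp [dlt]; ring
      · -- i=j=k ≠ l : odd exponent at l
        have hli : l ≠ i := Ne.symm hil
        rw [Finset.prod_eq_zero (Finset.mem_univ l)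
          (by rw [show e4 i i i l l = 1 by simp [e4, ind, hli]]; exact gm_odd hv odd_one)]
        simp [dlt, hil, hli]
    · have hki : k ≠ i := Ne.symm hik
      by_cases hil : i = l
      · subst hil
        -- i=j=l ≠ k : odd at k
        rw [Finset.prod_eq_zero (Finset.mem_univ k)
          (by rw [show e4 i i k i k = 1 by simp [e4, ind, hki]]; exact gm_odd hv odd_one)]
        simp [dlt, hik, hki]
      · by_cases hkl : k = l
        · subst hkl
          rw [prod_pair hik (fun a hai hak => by simp [e4, ind, hai, hak]; exact gm0)]
          rw [show e4 i i k k i = 2 by simp [e4, ind, hik],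
            show e4 i i k k k = 2 by simp [e4, ind, hki], gm2 hv]
          simp [dlt, hik, hki]
          ring
        · have hlk : l ≠ k := fun h' => hkl h'.symm
          rw [Finset.prod_eq_zero (Finset.mem_univ k)
            (by rw [show e4 i i k l k = 1 by simp [e4, ind, hki, hkl]]; exact gm_odd hv odd_one)]
          simp [dlt, hik, hki, hkl, hlk, hil]
  · have hji : j ≠ i := Ne.symm hij
    by_cases hik : i = k
    · subst hik
      by_cases hjl : j = l
      · subst hjl
        rw [prod_pair hij (fun a hai haj => by simp [e4, ind, hai, haj]; exact gm0)]
        rw [show e4 i j i j i = 2 by simp [e4, ind, hij],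
          show e4 i j i j j = 2 by simp [e4, ind, hji], gm2 hv]
        simp [dlt, hij, hji]
        ring
      · have hlj : l ≠ j := fun h' => hjl h'.symm
        rw [Finset.prod_eq_zero (Finset.mem_univ j)
          (by rw [show e4 i j i l j = 1 by simp [e4, ind, hji, hjl]]; exact gm_odd hv odd_one)]
        simp [dlt, hij, hji, hjl, hlj]
    · have hki : k ≠ i := Ne.symm hik
      by_cases hil : i = l
      · subst hil
        by_cases hjk : j = k
        · subst hjk
          rw [prod_pair hij (fun a hai haj => by simp [e4, ind, hai, haj]; exact gm0)]
          rw [show e4 i j j i i = 2 by simp [e4, ind, hij],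
            show e4 i j j i j = 2 by simp [e4, ind, hji], gm2 hv]
          simp [dlt, hij, hji, hik, hki]
          ring
        · have hkj : k ≠ j := fun h' => hjk h'.symm
          rw [Finset.prod_eq_zero (Finset.mem_univ j)
            (by rw [show e4 i j k i j = 1 by simp [e4, ind, hji, hjk]]; exact gm_odd hv odd_one)]
          simp [dlt, hij, hji, hjk, hkj, hik, hki]
      · have hli : l ≠ i := fun h' => hil h'.symm
        rw [Finset.prod_eq_zero (Finset.mem_univ i)
          (by rw [show e4 i j k l i = 1 by simp [e4, ind, hij, hik, hil]]; exact gm_odd hv odd_one)]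
        simp [dlt, hij, hik, hil, hji, hki, hli]

end Pi

section Pi2
variable {ι : Type*} [Fintype ι] [DecidableEq ι] {v : ℝ≥0}
variable (H : ι → ι → ℝ)

/-- the linear form -/
def lf (H : ι → ι → ℝ) (p : ι) (x : ι → ℝ) : ℝ := ∑ k, H p k * x k

-- expansions
lemma exp_xA (i p : ι) :
    (fun x : ι → ℝ => x i * lf H p x) = fun x => ∑ k, H p k * (x i * x k) := by
  funext x
  simp only [lf, Finset.mul_sum]
  exact Finset.sum_congr rfl fun k _ => by ring

lemma exp_AA (p q : ι) :
    (fun x : ι → ℝ => lf H p x * lf H q x)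
      = fun x => ∑ k, ∑ l, (H p k * H q l) * (x k * x l) := by
  funext x
  rw [lf, lf, Finset.sum_mul_sum]
  exact Finset.sum_congr rfl fun k _ => Finset.sum_congr rfl fun l _ => by ring

lemma exp_xAA (i p q : ι) :
    (fun x : ι → ℝ => x i * lf H p x * lf H q x)
      = fun x => ∑ k, ∑ l, (H p k * H q l) * (x i * x k * x l) := by
  funext x
  have h1 : x i * lf H p x = ∑ k, x i * (H p k * x k) := by
    rw [lf, Finset.mul_sum]
  rw [h1, lf, Finset.sum_mul_sum]
  exact Finset.sum_congr rfl fun k _ => Finset.sum_congr rfl fun l _ => by ring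

lemma exp_AAA (p q r : ι) :
    (fun x : ι → ℝ => lf H p x * lf H q x * lf H r x)
      = fun x => ∑ k, ∑ l, ∑ m, (H p k * H q l * H r m) * (x k * x l * x m) := by
  funext x
  have h1 : lf H p x * lf H q x = ∑ k, ∑ l, (H p k * x k) * (H q l * x l) := by
    rw [lf, lf, Finset.sum_mul_sum]
  rw [h1, Finset.sum_mul]
  refine Finset.sum_congr rfl fun k _ => ?_
  rw [lf, Finset.sum_mul_sum]
  exact Finset.sum_congr rfl fun l _ => Finset.sum_congr rfl fun m _ => by ring

lemma exp_AAAA (p q r w : ι) :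
    (fun x : ι → ℝ => lf H p x * lf H q x * lf H r x * lf H w x)
      = fun x => ∑ k, ∑ l, ∑ m, ∑ o,
          (H p k * H q l * H r m * H w o) * (x k * x l * x m * x o) := by
  funext x
  have h1 : lf H p x * lf H q x * lf H r x
      = ∑ k, ∑ l, ∑ m, ((H p k * x k) * (H q l * x l)) * (H r m * x m) := by
    have h2 : lf H p x * lf H q x = ∑ k, ∑ l, (H p k * x k) * (H q l * x l) := by
      rw [lf, lf, Finset.sum_mul_sum]
    rw [h2, Finset.sum_mul]
    refine Finset.sum_congr rfl fun k _ => ?_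
    rw [lf, Finset.sum_mul_sum]
  rw [h1, Finset.sum_mul]
  refine Finset.sum_congr rfl fun k _ => ?_
  rw [Finset.sum_mul]
  refine Finset.sum_congr rfl fun l _ => ?_
  rw [lf, Finset.sum_mul_sum]
  exact Finset.sum_congr rfl fun m _ => Finset.sum_congr rfl fun o _ => by ring

-- integrability
lemma IntA (hv : v ≠ 0) (p : ι) : Integrable (fun x : ι → ℝ => lf H p x) (piG ι v) := by
  apply integrable_finset_sum
  exact fun k _ => (Int1 hv k).const_mul _

lemma IntxA (hv : v ≠ 0) (i p : ι) :
    Integrable (fun x : ι → ℝ => x i * lf H p x) (piG ι v) := by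
  rw [exp_xA]
  exact integrable_finset_sum _ fun k _ => (Int2 hv i k).const_mul _

lemma IntAA (hv : v ≠ 0) (p q : ι) :
    Integrable (fun x : ι → ℝ => lf H p x * lf H q x) (piG ι v) := by
  rw [exp_AA]
  exact integrable_finset_sum _ fun k _ =>
    integrable_finset_sum _ fun l _ => (Int2 hv k l).const_mul _

lemma IntxAA (hv : v ≠ 0) (i p q : ι) :
    Integrable (fun x : ι → ℝ => x i * lf H p x * lf H q x) (piG ι v) := by
  rw [exp_xAA]
  exact integrable_finset_sum _ fun k _ =>
    integrable_finset_sum _ fun l _ => (Int3 hv i k l).const_mul _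

lemma IntAAA (hv : v ≠ 0) (p q r : ι) :
    Integrable (fun x : ι → ℝ => lf H p x * lf H q x * lf H r x) (piG ι v) := by
  rw [exp_AAA]
  exact integrable_finset_sum _ fun k _ => integrable_finset_sum _ fun l _ =>
    integrable_finset_sum _ fun m _ => (Int3 hv k l m).const_mul _

lemma IntAAAA (hv : v ≠ 0) (p q r w : ι) :
    Integrable (fun x : ι → ℝ => lf H p x * lf H q x * lf H r x * lf H w x) (piG ι v) := by
  rw [exp_AAAA]
  exact integrable_finset_sum _ fun k _ => integrable_finset_sum _ fun l _ =>
    integrable_finset_sum _ fun m _ => integrable_finset_sum _ fun o _ =>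
      (Int4 hv k l m o).const_mul _

-- integrals
lemma E_A (hv : v ≠ 0) (p : ι) : ∫ x : ι → ℝ, lf H p x ∂(piG ι v) = 0 := by
  unfold lf
  rw [integral_finset_sum _ fun k _ => (Int1 hv k).const_mul _]
  simp_rw [integral_const_mul, I1 hv, mul_zero, Finset.sum_const_zero]

lemma E_xA (hv : v ≠ 0) (i p : ι) :
    ∫ x : ι → ℝ, x i * lf H p x ∂(piG ι v) = (v:ℝ) * H p i := by
  rw [exp_xA]
  rw [integral_finset_sum _ fun k _ => (Int2 hv i k).const_mul _]
  simp_rw [integral_const_mul, I2 hv, mul_ite, mul_zero, Finset.sum_ite_eq]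
  simp [mul_comm]

lemma E_AA (hv : v ≠ 0) (p q : ι) :
    ∫ x : ι → ℝ, lf H p x * lf H q x ∂(piG ι v) = (v:ℝ) * ∑ k, H p k * H q k := by
  rw [exp_AA]
  rw [integral_finset_sum _ fun k _ =>
    integrable_finset_sum _ fun l _ => (Int2 hv k l).const_mul _]
  have h : ∀ k : ι, ∫ x : ι → ℝ, (∑ l, (H p k * H q l) * (x k * x l)) ∂(piG ι v)
      = (v:ℝ) * (H p k * H q k) := by
    intro k
    rw [integral_finset_sum _ fun l _ => (Int2 hv k l).const_mul _]
    simp_rw [integral_const_mul, I2 hv, mul_ite, mul_zero, Finset.sum_ite_eq]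
    simp [mul_comm]
  simp_rw [h, ← Finset.mul_sum]

lemma E_xAA (hv : v ≠ 0) (i p q : ι) :
    ∫ x : ι → ℝ, x i * lf H p x * lf H q x ∂(piG ι v) = 0 := by
  rw [exp_xAA]
  rw [integral_finset_sum _ fun k _ =>
    integrable_finset_sum _ fun l _ => (Int3 hv i k l).const_mul _]
  have h : ∀ k : ι, ∫ x : ι → ℝ, (∑ l, (H p k * H q l) * (x i * x k * x l)) ∂(piG ι v) = 0 := by
    intro k
    rw [integral_finset_sum _ fun l _ => (Int3 hv i k l).const_mul _]
    simp_rw [integral_const_mul, I3 hv, mul_zero, Finset.sum_const_zero]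
  simp_rw [h, Finset.sum_const_zero]

lemma E_AAA (hv : v ≠ 0) (p q r : ι) :
    ∫ x : ι → ℝ, lf H p x * lf H q x * lf H r x ∂(piG ι v) = 0 := by
  rw [exp_AAA]
  rw [integral_finset_sum _ fun k _ => integrable_finset_sum _ fun l _ =>
    integrable_finset_sum _ fun m _ => (Int3 hv k l m).const_mul _]
  have h : ∀ k : ι, ∫ x : ι → ℝ,
      (∑ l, ∑ m, (H p k * H q l * H r m) * (x k * x l * x m)) ∂(piG ι v) = 0 := by
    intro k
    rw [integral_finset_sum _ fun l _ =>
      integrable_finset_sum _ fun m _ => (Int3 hv k l m).const_mul _]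
    have h2 : ∀ l : ι, ∫ x : ι → ℝ,
        (∑ m, (H p k * H q l * H r m) * (x k * x l * x m)) ∂(piG ι v) = 0 := by
      intro l
      rw [integral_finset_sum _ fun m _ => (Int3 hv k l m).const_mul _]
      simp_rw [integral_const_mul, I3 hv, mul_zero, Finset.sum_const_zero]
    simp_rw [h2, Finset.sum_const_zero]
  simp_rw [h, Finset.sum_const_zero]

-- the Wick collapse, pure algebra
lemma wick_sum (a b c d : ι → ℝ) :
    ∑ k, ∑ l, ∑ m, ∑ o, (a k * b l * c m * d o)
        * (dlt k l * dlt m o + dlt k m * dlt l o + dlt k o * dlt l m)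
      = (∑ k, a k * b k) * (∑ k, c k * d k)
        + (∑ k, a k * c k) * (∑ k, b k * d k)
        + (∑ k, a k * d k) * (∑ k, b k * c k) := by
  have h1 : ∑ k, ∑ l, ∑ m, ∑ o, (a k * b l * c m * d o) * (dlt k l * dlt m o)
      = (∑ k, a k * b k) * (∑ k, c k * d k) := by
    simp only [dlt, mul_ite, ite_mul, mul_zero, zero_mul, mul_one, one_mul,
      Finset.sum_ite_irrel, Finset.sum_const_zero, Finset.sum_ite_eq, Finset.sum_ite_eq',
      Finset.mem_univ, if_true]
    rw [Finset.sum_mul_sum]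
    exact Finset.sum_congr rfl fun k _ => Finset.sum_congr rfl fun m _ => by ring
  have h2 : ∑ k, ∑ l, ∑ m, ∑ o, (a k * b l * c m * d o) * (dlt k m * dlt l o)
      = (∑ k, a k * c k) * (∑ l, b l * d l) := by
    simp only [dlt, mul_ite, ite_mul, mul_zero, zero_mul, mul_one, one_mul,
      Finset.sum_ite_irrel, Finset.sum_const_zero, Finset.sum_ite_eq, Finset.sum_ite_eq',
      Finset.mem_univ, if_true]
    rw [Finset.sum_mul_sum]
    exact Finset.sum_congr rfl fun k _ => Finset.sum_congr rfl fun l _ => by ring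
  have h3 : ∑ k, ∑ l, ∑ m, ∑ o, (a k * b l * c m * d o) * (dlt k o * dlt l m)
      = (∑ k, a k * d k) * (∑ l, b l * c l) := by
    simp only [dlt, mul_ite, ite_mul, mul_zero, zero_mul, mul_one, one_mul,
      Finset.sum_ite_irrel, Finset.sum_const_zero, Finset.sum_ite_eq, Finset.sum_ite_eq',
      Finset.mem_univ, if_true]
    rw [Finset.sum_mul_sum]
    exact Finset.sum_congr rfl fun k _ => Finset.sum_congr rfl fun l _ => by ring
  calc ∑ k, ∑ l, ∑ m, ∑ o, (a k * b l * c m * d o)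
        * (dlt k l * dlt m o + dlt k m * dlt l o + dlt k o * dlt l m)
      = (∑ k, ∑ l, ∑ m, ∑ o, (a k * b l * c m * d o) * (dlt k l * dlt m o))
        + (∑ k, ∑ l, ∑ m, ∑ o, (a k * b l * c m * d o) * (dlt k m * dlt l o))
        + (∑ k, ∑ l, ∑ m, ∑ o, (a k * b l * c m * d o) * (dlt k o * dlt l m)) := by
        simp only [mul_add, Finset.sum_add_distrib]
    _ = _ := by rw [h1, h2, h3]

lemma E_AAAA (hv : v ≠ 0) (i j : ι) :
    ∫ x : ι → ℝ, lf H i x * lf H i x * lf H j x * lf H j x ∂(piG ι v)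
      = (v:ℝ)^2 * ((∑ k, H i k * H i k) * (∑ k, H j k * H j k)
          + 2 * (∑ k, H i k * H j k)^2) := by
  rw [exp_AAAA]
  rw [integral_finset_sum _ fun k _ => integrable_finset_sum _ fun l _ =>
    integrable_finset_sum _ fun m _ => integrable_finset_sum _ fun o _ =>
      (Int4 hv k l m o).const_mul _]
  have h : ∀ k : ι, ∫ x : ι → ℝ, (∑ l, ∑ m, ∑ o,
      (H i k * H i l * H j m * H j o) * (x k * x l * x m * x o)) ∂(piG ι v)
      = ∑ l, ∑ m, ∑ o, (H i k * H i l * H j m * H j o)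
          * ((v:ℝ)^2 * (dlt k l * dlt m o + dlt k m * dlt l o + dlt k o * dlt l m)) := by
    intro k
    rw [integral_finset_sum _ fun l _ => integrable_finset_sum _ fun m _ =>
      integrable_finset_sum _ fun o _ => (Int4 hv k l m o).const_mul _]
    refine Finset.sum_congr rfl fun l _ => ?_
    rw [integral_finset_sum _ fun m _ =>
      integrable_finset_sum _ fun o _ => (Int4 hv k l m o).const_mul _]
    refine Finset.sum_congr rfl fun m _ => ?_
    rw [integral_finset_sum _ fun o _ => (Int4 hv k l m o).const_mul _]
    refine Finset.sum_congr rfl fun o _ => ?_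
    rw [integral_const_mul, I4 hv]
  simp_rw [h]
  have hterm : ∀ k l m o : ι, (H i k * H i l * H j m * H j o)
      * ((v:ℝ)^2 * (dlt k l * dlt m o + dlt k m * dlt l o + dlt k o * dlt l m))
      = (v:ℝ)^2 * ((H i k * H i l * H j m * H j o)
          * (dlt k l * dlt m o + dlt k m * dlt l o + dlt k o * dlt l m)) := by
    intro k l m o; ring
  simp_rw [hterm, ← Finset.mul_sum]
  rw [wick_sum]
  ring

end Pi2


lemma chi_eq {n : ℕ} (x y : BV n) :
    (-1 : ℝ) ^ bip x y = ∏ t, (if x t && y t then (-1:ℝ) else 1) := by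
  rw [bip, ← Finset.prod_const, Finset.prod_filter]

lemma char_sum {n : ℕ} (x x' : BV n) :
    ∑ y : BV n, (-1 : ℝ) ^ bip x y * (-1 : ℝ) ^ bip x' y
      = if x = x' then (2:ℝ)^n else 0 := by
  have h1 : ∀ y : BV n, (-1 : ℝ) ^ bip x y * (-1 : ℝ) ^ bip x' y
      = ∏ t, ((if x t && y t then (-1:ℝ) else 1) * (if x' t && y t then (-1:ℝ) else 1)) := by
    intro y
    rw [chi_eq, chi_eq, ← Finset.prod_mul_distrib]
  simp_rw [h1]
  have h2 : ∑ y : BV n, ∏ t, ((if x t && y t then (-1:ℝ) else 1)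
      * (if x' t && y t then (-1:ℝ) else 1))
      = ∏ t, ∑ b : Bool, ((if x t && b then (-1:ℝ) else 1) * (if x' t && b then (-1:ℝ) else 1)) := by
    rw [Finset.prod_univ_sum]
    rw [← Fintype.piFinset_univ]
  rw [h2]
  have h3 : ∀ t, ∑ b : Bool, ((if x t && b then (-1:ℝ) else 1) * (if x' t && b then (-1:ℝ) else 1))
      = if x t = x' t then 2 else 0 := by
    intro t
    rw [Fintype.sum_bool]
    cases hx : x t <;> cases hx' : x' t <;> norm_num
  simp_rw [h3]
  by_cases hxx : x = x'
  · subst hxx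
    simp
  · obtain ⟨t, ht⟩ : ∃ t, x t ≠ x' t := by
      by_contra hc
      push_neg at hc
      exact hxx (funext hc)
    rw [if_neg hxx]
    exact Finset.prod_eq_zero (Finset.mem_univ t) (by simp [ht, if_neg])

lemma sqrtN_pos (n : ℕ) : (0:ℝ) < Real.sqrt (2 ^ n) := by
  apply Real.sqrt_pos.2; positivity

lemma had_orth (n : ℕ) (i j : BV n) :
    ∑ k, Had n i k * Had n j k = if i = j then (1:ℝ) else 0 := by
  have hs := sqrtN_pos n
  have hsq : Real.sqrt (2 ^ n) * Real.sqrt (2 ^ n) = 2 ^ n :=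
    Real.mul_self_sqrt (by positivity)
  have h1 : ∀ k, Had n i k * Had n j k
      = ((-1 : ℝ) ^ bip i k * (-1 : ℝ) ^ bip j k) / (2 ^ n) := by
    intro k
    simp only [Had, Matrix.of_apply]
    rw [div_mul_div_comm, hsq]
  simp_rw [h1, ← Finset.sum_div, char_sum]
  by_cases hij : i = j
  · simp [hij]
  · simp [hij]

lemma had_abs (n : ℕ) (i j : BV n) : |Had n i j| = 1 / Real.sqrt (2 ^ n) := by
  have hs := sqrtN_pos n
  simp only [Had, Matrix.of_apply]
  rw [abs_div, abs_pow, abs_neg, abs_one, one_pow, abs_of_pos hs]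


end S10

open S10

/-- There is a universal constant `K` such that: for `t ≥ 1`, fixed
`Y ∈ [-1/2, 1/2]^N`, `ΔX` centered Gaussian with covariance `(ε/t) I_N`,
`ΔY = H ΔX` and `ΔY' = 2 Y∘ΔY + ΔY∘ΔY - (ε/t)𝟙`:
(i) `Cov(ΔX_i, ΔX_j) = 0` for `i ≠ j`;
(ii) `|Cov(2 ΔX_i, 2 ΔY'_j)| ≤ 4ε/(t√N) + K t^{-3/2}` for all `i, j`;
(iii) `|Cov(2 ΔY'_i, 2 ΔY'_j)| ≤ K t^{-3/2}` for `i ≠ j`. -/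
theorem stmt10 :
    ∃ K : ℝ, ∀ C : ℝ, 20 ≤ C → ∀ n : ℕ, 1 ≤ n → ∀ t : ℝ, 1 ≤ t →
      ∀ Y : BV n → ℝ, (∀ i, |Y i| ≤ 1 / 2) →
        (∀ i j : BV n, i ≠ j →
          cov (gaussStep C n t) (fun dX => dX i) (fun dX => dX j) = 0) ∧
        (∀ i j : BV n,
          |cov (gaussStep C n t) (fun dX => 2 * dX i) (fun dX => 2 * dY' C n t Y dX j)|
            ≤ 4 * eps C n / (t * Real.sqrt (2 ^ n)) + K * t ^ (-(3 : ℝ) / 2)) ∧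
        (∀ i j : BV n, i ≠ j →
          |cov (gaussStep C n t) (fun dX => 2 * dY' C n t Y dX i)
            (fun dX => 2 * dY' C n t Y dX j)| ≤ K * t ^ (-(3 : ℝ) / 2)) := by
  refine ⟨0, fun C hC n hn t ht Y hY => ?_⟩
  have hC0 : (0:ℝ) < C := lt_of_lt_of_le (by norm_num) hC
  have hlog : 0 < Real.log (2 ^ n) := by
    apply Real.log_pos
    apply one_lt_pow₀ (by norm_num : (1:ℝ) < 2)
    omega
  have heps : 0 < eps C n := by
    rw [eps]
    exact div_pos one_pos (mul_pos hC0 hlog)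
  have ht0 : (0:ℝ) < t := lt_of_lt_of_le one_pos ht
  set s : ℝ := eps C n / t with hsdef
  have hs : 0 < s := div_pos heps ht0
  set v : ℝ≥0 := s.toNNReal with hvdef
  have hv : v ≠ 0 := by
    simp only [hvdef, ne_eq, Real.toNNReal_eq_zero, not_le]
    exact hs
  have hvs : ((v:ℝ≥0) : ℝ) = s := Real.coe_toNNReal _ hs.le
  have hμ : gaussStep C n t = piG (BV n) v := rfl
  have hA : ∀ (x : BV n → ℝ) (i : BV n), (Had n).mulVec x i = lf (Had n) i x := by
    intro x i
    rfl
  have hsN := sqrtN_pos n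
  have hsN' : Real.sqrt (2 ^ n) ≠ 0 := ne_of_gt hsN
  -- expected value of 2 * dY' m
  have hgm : ∀ m : BV n, (fun x : BV n → ℝ => 2 * dY' C n t Y x m)
      = fun x => (4 * Y m) * lf (Had n) m x
          + ((2:ℝ) * (lf (Had n) m x * lf (Had n) m x) - (2*s) * 1) := by
    intro m
    funext x
    simp only [dY', hA, ← hsdef]
    ring
  have hEgm : ∀ m : BV n, ∫ x, (2 * dY' C n t Y x m) ∂(piG (BV n) v) = 0 := by
    intro m
    rw [hgm m]
    have ha : Integrable (fun x : BV n → ℝ => (4 * Y m) * lf (Had n) m x) (piG (BV n) v) :=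
      (IntA (Had n) hv m).const_mul _
    have hb1 : Integrable (fun x : BV n → ℝ =>
        (2:ℝ) * (lf (Had n) m x * lf (Had n) m x)) (piG (BV n) v) :=
      (IntAA (Had n) hv m m).const_mul _
    have hb2 : Integrable (fun _ : BV n → ℝ => (2*s) * 1) (piG (BV n) v) :=
      (integrable_const _).const_mul _
    have hb : Integrable (fun x : BV n → ℝ =>
        (2:ℝ) * (lf (Had n) m x * lf (Had n) m x) - (2*s) * 1) (piG (BV n) v) := hb1.sub hb2
    rw [integral_add ha hb, integral_sub hb1 hb2]
    rw [integral_const_mul, integral_const_mul, integral_const_mul]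
    rw [E_A (Had n) hv m, E_AA (Had n) hv m m, had_orth n m m, if_pos rfl, hvs]
    simp
  have hEgm' : ∀ m : BV n, ∫ x, dY' C n t Y x m ∂(piG (BV n) v) = 0 := by
    intro m
    have h2 := hEgm m
    rw [integral_const_mul] at h2
    linarith
  refine ⟨?_, ?_, ?_⟩
  · -- (i)
    intro i j hij
    rw [hμ]
    unfold cov
    rw [I2 hv i j, if_neg hij, I1 hv i, I1 hv j]
    ring
  · -- (ii)
    intro i j
    rw [hμ]
    unfold cov
    have hf : ∫ x, (2 * x i) ∂(piG (BV n) v) = 0 := by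
      rw [integral_const_mul, I1 hv i, mul_zero]
    have hfg : (fun x : BV n → ℝ => (2 * x i) * (2 * dY' C n t Y x j))
        = fun x => (8 * Y j) * (x i * lf (Had n) j x)
            + ((4:ℝ) * (x i * lf (Had n) j x * lf (Had n) j x) - (4 * s) * x i) := by
      funext x
      simp only [dY', hA, ← hsdef]
      ring
    rw [hfg]
    have ha : Integrable (fun x : BV n → ℝ =>
        (8 * Y j) * (x i * lf (Had n) j x)) (piG (BV n) v) := (IntxA (Had n) hv i j).const_mul _
    have hb1 : Integrable (fun x : BV n → ℝ =>
        (4:ℝ) * (x i * lf (Had n) j x * lf (Had n) j x)) (piG (BV n) v) :=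
      (IntxAA (Had n) hv i j j).const_mul _
    have hb2 : Integrable (fun x : BV n → ℝ => (4 * s) * x i) (piG (BV n) v) :=
      (Int1 hv i).const_mul _
    have hb : Integrable (fun x : BV n → ℝ =>
        (4:ℝ) * (x i * lf (Had n) j x * lf (Had n) j x) - (4 * s) * x i) (piG (BV n) v) :=
      hb1.sub hb2
    rw [integral_add ha hb, integral_sub hb1 hb2]
    rw [integral_const_mul, integral_const_mul, integral_const_mul]
    rw [E_xA (Had n) hv i j, E_xAA (Had n) hv i j j, I1 hv i, hEgm j, hf]
    rw [hvs]
    have hval : 8 * Y j * (s * Had n j i) + (4 * 0 - 4 * s * 0) - 0 * 0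
        = 8 * Y j * (s * Had n j i) := by ring
    rw [hval]
    have habs : |8 * Y j * (s * Had n j i)| = 8 * |Y j| * (s * |Had n j i|) := by
      rw [abs_mul, abs_mul, abs_mul, abs_of_nonneg hs.le]
      norm_num
    rw [habs, had_abs n j i]
    have hb1 : 8 * |Y j| * (s * (1 / Real.sqrt (2 ^ n)))
        ≤ 8 * (1/2) * (s * (1 / Real.sqrt (2 ^ n))) := by
      gcongr
      exact hY j
    refine hb1.trans ?_
    have : (0:ℝ) * t ^ (-(3 : ℝ) / 2) = 0 := by ring
    rw [this, add_zero]
    apply le_of_eq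
    rw [hsdef]
    field_simp
    ring
  · -- (iii)
    intro i j hij
    rw [hμ]
    unfold cov
    have hprod : (fun x : BV n → ℝ => (2 * dY' C n t Y x i) * (2 * dY' C n t Y x j))
        = fun x => (16 * Y i * Y j) * (lf (Had n) i x * lf (Had n) j x)
          + ((8 * Y i) * (lf (Had n) i x * lf (Had n) j x * lf (Had n) j x)
          + ((8 * Y j) * (lf (Had n) j x * lf (Had n) i x * lf (Had n) i x)
          + ((4:ℝ) * (lf (Had n) i x * lf (Had n) i x * lf (Had n) j x * lf (Had n) j x)
          + (((-8) * s * Y i) * lf (Had n) i x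
          + (((-8) * s * Y j) * lf (Had n) j x
          + (((-4) * s) * (lf (Had n) i x * lf (Had n) i x)
          + (((-4) * s) * (lf (Had n) j x * lf (Had n) j x)
          + (4 * s^2) * 1))))))) := by
      funext x
      simp only [dY', hA, ← hsdef]
      ring
    set G := Had n with hG
    have i1 : Integrable (fun x : BV n → ℝ =>
        (16 * Y i * Y j) * (lf G i x * lf G j x)) (piG (BV n) v) :=
      (IntAA G hv i j).const_mul _
    have i2 : Integrable (fun x : BV n → ℝ =>
        (8 * Y i) * (lf G i x * lf G j x * lf G j x)) (piG (BV n) v) :=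
      (IntAAA G hv i j j).const_mul _
    have i3 : Integrable (fun x : BV n → ℝ =>
        (8 * Y j) * (lf G j x * lf G i x * lf G i x)) (piG (BV n) v) :=
      (IntAAA G hv j i i).const_mul _
    have i4 : Integrable (fun x : BV n → ℝ =>
        (4:ℝ) * (lf G i x * lf G i x * lf G j x * lf G j x)) (piG (BV n) v) :=
      (IntAAAA G hv i i j j).const_mul _
    have i5 : Integrable (fun x : BV n → ℝ =>
        ((-8) * s * Y i) * lf G i x) (piG (BV n) v) := (IntA G hv i).const_mul _
    have i6 : Integrable (fun x : BV n → ℝ =>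
        ((-8) * s * Y j) * lf G j x) (piG (BV n) v) := (IntA G hv j).const_mul _
    have i7 : Integrable (fun x : BV n → ℝ =>
        ((-4) * s) * (lf G i x * lf G i x)) (piG (BV n) v) := (IntAA G hv i i).const_mul _
    have i8 : Integrable (fun x : BV n → ℝ =>
        ((-4) * s) * (lf G j x * lf G j x)) (piG (BV n) v) := (IntAA G hv j j).const_mul _
    have i9 : Integrable (fun _ : BV n → ℝ => (4 * s^2) * 1) (piG (BV n) v) :=
      (integrable_const _).const_mul _
    have t89 : Integrable (fun x : BV n → ℝ =>
        ((-4) * s) * (lf G j x * lf G j x) + (4 * s^2) * 1) (piG (BV n) v) := i8.add i9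
    have t79 : Integrable (fun x : BV n → ℝ =>
        ((-4) * s) * (lf G i x * lf G i x)
        + (((-4) * s) * (lf G j x * lf G j x) + (4 * s^2) * 1)) (piG (BV n) v) := i7.add t89
    have t69 : Integrable (fun x : BV n → ℝ =>
        ((-8) * s * Y j) * lf G j x
        + (((-4) * s) * (lf G i x * lf G i x)
        + (((-4) * s) * (lf G j x * lf G j x) + (4 * s^2) * 1))) (piG (BV n) v) := i6.add t79
    have t59 : Integrable (fun x : BV n → ℝ =>
        ((-8) * s * Y i) * lf G i x
        + (((-8) * s * Y j) * lf G j x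
        + (((-4) * s) * (lf G i x * lf G i x)
        + (((-4) * s) * (lf G j x * lf G j x) + (4 * s^2) * 1)))) (piG (BV n) v) := i5.add t69
    have t49 : Integrable (fun x : BV n → ℝ =>
        (4:ℝ) * (lf G i x * lf G i x * lf G j x * lf G j x)
        + (((-8) * s * Y i) * lf G i x
        + (((-8) * s * Y j) * lf G j x
        + (((-4) * s) * (lf G i x * lf G i x)
        + (((-4) * s) * (lf G j x * lf G j x) + (4 * s^2) * 1))))) (piG (BV n) v) := i4.add t59
    have t39 : Integrable (fun x : BV n → ℝ =>
        (8 * Y j) * (lf G j x * lf G i x * lf G i x)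
        + ((4:ℝ) * (lf G i x * lf G i x * lf G j x * lf G j x)
        + (((-8) * s * Y i) * lf G i x
        + (((-8) * s * Y j) * lf G j x
        + (((-4) * s) * (lf G i x * lf G i x)
        + (((-4) * s) * (lf G j x * lf G j x) + (4 * s^2) * 1)))))) (piG (BV n) v) := i3.add t49
    have t29 : Integrable (fun x : BV n → ℝ =>
        (8 * Y i) * (lf G i x * lf G j x * lf G j x)
        + ((8 * Y j) * (lf G j x * lf G i x * lf G i x)
        + ((4:ℝ) * (lf G i x * lf G i x * lf G j x * lf G j x)
        + (((-8) * s * Y i) * lf G i x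
        + (((-8) * s * Y j) * lf G j x
        + (((-4) * s) * (lf G i x * lf G i x)
        + (((-4) * s) * (lf G j x * lf G j x) + (4 * s^2) * 1))))))) (piG (BV n) v) := i2.add t39
    rw [hprod]
    rw [integral_add i1 t29, integral_add i2 t39, integral_add i3 t49, integral_add i4 t59,
      integral_add i5 t69, integral_add i6 t79, integral_add i7 t89, integral_add i8 i9]
    simp only [integral_const_mul]
    rw [E_AA G hv i j, E_AAA G hv i j j, E_AAA G hv j i i,
      E_AAAA G hv i j, E_A G hv i, E_A G hv j,
      E_AA G hv i i, E_AA G hv j j]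
    rw [hG]
    rw [had_orth n i j, if_neg hij, had_orth n i i, if_pos rfl, had_orth n j j, if_pos rfl]
    rw [hEgm' i, hEgm' j, hvs]
    have hconst : ∫ (_ : BV n → ℝ), (1:ℝ) ∂(piG (BV n) v) = 1 := by simp
    rw [hconst]
    have hz : 16 * Y i * Y j * (s * 0) + (8 * Y i * 0 + (8 * Y j * 0
        + (4 * (s ^ 2 * (1 * 1 + 2 * 0 ^ 2)) + (-8 * s * Y i * 0 + (-8 * s * Y j * 0
        + (-4 * s * (s * 1) + (-4 * s * (s * 1) + 4 * s ^ 2 * 1)))))))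
        - (2 * 0) * (2 * 0) = 0 := by
      ring
    rw [hz]
    simp
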